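/- Let A be a Noetherian ring, m ⊂ A an ideal, and (M_i) an inverse system of A/m^{i+1}-modules with M_{i+1} ⊗ A/m^{i+1} ≅ M_i compatibly. If m ∈ lim← M_i maps to zero in M_i, then m ∈ m^{i+1} · (lim← M_j). -/

import Mathlib

/-- The inverse limit of an `ℕ`-indexed system of modules with transition maps
`f i : M (i+1) → M i`, realized as the submodule of compatible sequences in the
product. -/
def invLimit {R : Type*} [CommRing R] {M : ℕ → Type*}
    [∀ i, AddCommGroup (M i)] [∀ i, Module R (M i)]
    (f : ∀ i, M (i + 1) →ₗ[R] M i) : Submodule R (∀ i, M i) where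
  carrier := {x | ∀ i, f i (x (i + 1)) = x i}
  add_mem' := by intro a b ha hb i; simp [ha i, hb i]
  zero_mem' := by intro i; simp
  smul_mem' := by intro c a ha i; simp [ha i]

section Aux

variable {A : Type*} [CommRing A] {M : ℕ → Type*}
  [∀ i, AddCommGroup (M i)] [∀ i, Module A (M i)]
  (f : ∀ i, M (i + 1) →ₗ[A] M i)

/-- Composite transition maps. -/
noncomputable def transLE {j j' : ℕ} (h : j ≤ j') : M j' →ₗ[A] M j :=
  Nat.leRecOn (C := fun k => M k →ₗ[A] M j) h (fun {k} g => g ∘ₗ f k) LinearMap.id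

lemma transLE_self (j : ℕ) : transLE f (le_refl j) = LinearMap.id :=
  Nat.leRecOn_self _

lemma transLE_succ {j j' : ℕ} (h : j ≤ j') (h2 : j ≤ j' + 1) :
    transLE f h2 = (transLE f h) ∘ₗ f j' :=
  Nat.leRecOn_succ h _

lemma transLE_compat {x : ∀ i, M i} (hx : ∀ i, f i (x (i + 1)) = x i)
    {j j' : ℕ} (h : j ≤ j') : transLE f h (x j') = x j := by
  induction h with
  | refl => rw [transLE_self]; rfl
  | @step j' h' ih =>
    rw [transLE_succ f h']
    simpa [hx j'] using ih

lemma transLE_trans {j j' j'' : ℕ} (h1 : j ≤ j') (h2 : j' ≤ j'') :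
    transLE f (h1.trans h2) = (transLE f h1) ∘ₗ (transLE f h2) := by
  induction h2 with
  | refl => rw [transLE_self]; rfl
  | @step k h' ih =>
    rw [transLE_succ f (h1.trans h'), transLE_succ f h', ih, LinearMap.comp_assoc]

lemma smul_top_map {N N' : Type*} [AddCommGroup N] [Module A N]
    [AddCommGroup N'] [Module A N'] (φ : N →ₗ[A] N') (I : Ideal A) {v : N}
    (hv : v ∈ I • (⊤ : Submodule A N)) : φ v ∈ I • (⊤ : Submodule A N') := by
  refine Submodule.smul_induction_on hv ?_ ?_
  · intro r hr n _
    rw [map_smul]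
    exact Submodule.smul_mem_smul hr trivial
  · intro u v hu hv
    rw [map_add]; exact add_mem hu hv

lemma decomp {N : Type*} [AddCommGroup N] [Module A N] (s : Finset A)
    (P : Submodule A N) {v : N} (hv : v ∈ Ideal.span (↑s : Set A) • P) :
    ∃ c : A → N, (∀ a, c a ∈ P) ∧ ∑ a ∈ s, a • c a = v := by
  refine Submodule.smul_induction_on hv ?_ ?_
  · intro r hr n hn
    obtain ⟨g, -, hg⟩ := Submodule.mem_span_finset.mp hr
    refine ⟨fun a => g a • n, fun a => P.smul_mem _ hn, ?_⟩
    rw [← hg, Finset.sum_smul]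
    exact Finset.sum_congr rfl fun a _ => by
      rw [smul_smul, smul_eq_mul, mul_comm]
  · rintro u v ⟨c1, hc1, hs1⟩ ⟨c2, hc2, hs2⟩
    exact ⟨c1 + c2, fun a => P.add_mem (hc1 a) (hc2 a), by
      simp [smul_add, Finset.sum_add_distrib, hs1, hs2]⟩

lemma step_ex (m : Ideal A)
    (hsurj : ∀ i, Function.Surjective (f i))
    (hker : ∀ i, LinearMap.ker (f i) = (m ^ (i + 1)) • (⊤ : Submodule A (M (i + 1))))
    (i : ℕ) (x : ∀ j, M j) (hx : ∀ j, f j (x (j + 1)) = x j)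
    (s : Finset A) (hs : Submodule.span A (↑s : Set A) = m ^ (i + 1)) (k : ℕ) (c : A → M (i + k)) (hc : ∑ a ∈ s, a • c a = x (i + k)) :
    ∃ c' : A → M (i + k + 1), (∑ a ∈ s, a • c' a = x (i + k + 1)) ∧
      ∀ a, f (i + k) (c' a) - c a ∈ (m ^ k) • (⊤ : Submodule A (M (i + k))) := by
  choose z hz using fun a => hsurj (i + k) (c a)
  set d := x (i + k + 1) - ∑ a ∈ s, a • z a with hd
  have hfd : f (i + k) d = 0 := by
    simp [hd, map_sum, hz, hc, hx (i + k)]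
  have hdmem : d ∈ (m ^ (i + k + 1)) • (⊤ : Submodule A (M (i + k + 1))) := by
    rw [← hker (i + k)]; exact hfd
  have hpow : m ^ (i + k + 1) = m ^ (i + 1) * m ^ k := by
    rw [← pow_add]; congr 1; omega
  rw [hpow, mul_smul, ← hs] at hdmem
  obtain ⟨w, hw1, hw2⟩ := decomp s _ hdmem
  refine ⟨fun a => z a + w a, ?_, ?_⟩
  · simp only [smul_add, Finset.sum_add_distrib, hw2, hd]
    abel
  · intro a
    have : f (i + k) (z a + w a) - c a = f (i + k) (w a) := by
      rw [map_add, hz]; abel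
    rw [this]
    exact smul_top_map (f (i + k)) _ (hw1 a)

noncomputable def seqAux (m : Ideal A)
    (hsurj : ∀ i, Function.Surjective (f i))
    (hker : ∀ i, LinearMap.ker (f i) = (m ^ (i + 1)) • (⊤ : Submodule A (M (i + 1))))
    (i : ℕ) (x : ∀ j, M j) (hx : ∀ j, f j (x (j + 1)) = x j) (hxi : x i = 0)
    (s : Finset A) (hs : Submodule.span A (↑s : Set A) = m ^ (i + 1)) : ∀ k : ℕ, {c : A → M (i + k) // ∑ a ∈ s, a • c a = x (i + k)} :=
  fun k => Nat.rec
    ⟨0, by simp [hxi]⟩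
    (fun k prev =>
      ⟨(step_ex f m hsurj hker i x hx s hs k prev.1 prev.2).choose,
       (step_ex f m hsurj hker i x hx s hs k prev.1 prev.2).choose_spec.1⟩) k

lemma seqAux_rel (m : Ideal A)
    (hsurj : ∀ i, Function.Surjective (f i))
    (hker : ∀ i, LinearMap.ker (f i) = (m ^ (i + 1)) • (⊤ : Submodule A (M (i + 1))))
    (i : ℕ) (x : ∀ j, M j) (hx : ∀ j, f j (x (j + 1)) = x j) (hxi : x i = 0)
    (s : Finset A) (hs : Submodule.span A (↑s : Set A) = m ^ (i + 1)) (k : ℕ) (a : A) :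
    f (i + k) ((seqAux f m hsurj hker i x hx hxi s hs (k + 1)).1 a)
      - (seqAux f m hsurj hker i x hx hxi s hs k).1 a
      ∈ (m ^ k) • (⊤ : Submodule A (M (i + k))) :=
  (step_ex f m hsurj hker i x hx s hs k
    (seqAux f m hsurj hker i x hx hxi s hs k).1
    (seqAux f m hsurj hker i x hx hxi s hs k).2).choose_spec.2 a


lemma tor_zero (m : Ideal A)
    (htor : ∀ i, ∀ a ∈ m ^ (i + 1), ∀ x : M i, a • x = 0)
    (j : ℕ) {v : M j} (hv : v ∈ (m ^ (j + 1)) • (⊤ : Submodule A (M j))) : v = 0 := by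
  refine Submodule.smul_induction_on hv ?_ ?_
  · intro r hr n _; exact htor j r hr n
  · intro u v hu hv; rw [hu, hv, add_zero]

lemma seqAux_stab (m : Ideal A)
    (htor : ∀ i, ∀ a ∈ m ^ (i + 1), ∀ x : M i, a • x = 0)
    (hsurj : ∀ i, Function.Surjective (f i))
    (hker : ∀ i, LinearMap.ker (f i) = (m ^ (i + 1)) • (⊤ : Submodule A (M (i + 1))))
    (i : ℕ) (x : ∀ j, M j) (hx : ∀ j, f j (x (j + 1)) = x j) (hxi : x i = 0)
    (s : Finset A) (hs : Submodule.span A (↑s : Set A) = m ^ (i + 1))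
    (j : ℕ) (a : A) : ∀ k : ℕ, ∀ (h1 : j + 1 ≤ k) (h2 : j ≤ i + k),
    transLE f h2 ((seqAux f m hsurj hker i x hx hxi s hs k).1 a) =
      transLE f (show j ≤ i + (j + 1) by omega)
        ((seqAux f m hsurj hker i x hx hxi s hs (j + 1)).1 a) := by
  intro k h1
  induction k, h1 using Nat.le_induction with
  | base => intro h2; rfl
  | succ k hk ih =>
    intro h2
    have h2' : j ≤ i + k := by omega
    have hstep := transLE_succ f h2' h2
    have happ : transLE f h2 ((seqAux f m hsurj hker i x hx hxi s hs (k + 1)).1 a)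
        = transLE f h2' (f (i + k) ((seqAux f m hsurj hker i x hx hxi s hs (k + 1)).1 a)) :=
      DFunLike.congr_fun hstep _
    rw [happ]
    set c := (seqAux f m hsurj hker i x hx hxi s hs k).1 a with hc
    set e := f (i + k) ((seqAux f m hsurj hker i x hx hxi s hs (k + 1)).1 a) - c with he
    have hmem : e ∈ (m ^ k) • (⊤ : Submodule A (M (i + k))) :=
      seqAux_rel f m hsurj hker i x hx hxi s hs k a
    have : f (i + k) ((seqAux f m hsurj hker i x hx hxi s hs (k + 1)).1 a) = c + e := by
      rw [he]; abel
    rw [this, map_add]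
    have hz : transLE f h2' e = 0 := by
      refine tor_zero m htor j ?_
      have := smul_top_map (transLE f h2') (m ^ k) hmem
      exact Submodule.smul_mono_left (Ideal.pow_le_pow_right hk) this
    rw [hz, add_zero]
    exact ih h2'

end Aux

/-- Let `A` be a Noetherian ring, `m ⊆ A` an ideal, and
`(M i)` an inverse system of `A/m^(i+1)`-modules with
`M (i+1) ⊗ A/m^(i+1) ≅ M i` compatibly (surjective transitions with kernel
`m^(i+1) • M (i+1)`).  If an element of `lim← M j` maps to zero in `M i`, then
it lies in `m^(i+1) · (lim← M j)`. -/



theorem stmt7 {A : Type*} [CommRing A] [IsNoetherianRing A] (m : Ideal A)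
    {M : ℕ → Type*} [∀ i, AddCommGroup (M i)] [∀ i, Module A (M i)]
    (f : ∀ i, M (i + 1) →ₗ[A] M i)
    (htor : ∀ i, ∀ a ∈ m ^ (i + 1), ∀ x : M i, a • x = 0)
    (hsurj : ∀ i, Function.Surjective (f i))
    (hker : ∀ i, LinearMap.ker (f i) = (m ^ (i + 1)) • (⊤ : Submodule A (M (i + 1)))) :
    ∀ i, ∀ x ∈ invLimit f, x i = 0 → x ∈ (m ^ (i + 1)) • (invLimit f) := by
  intro i x hxmem hxi
  obtain ⟨s, hs⟩ : (m ^ (i + 1)).FG := IsNoetherian.noetherian _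
  have hx : ∀ j, f j (x (j + 1)) = x j := hxmem
  set σ := seqAux f m hsurj hker i x hx hxi s hs with hσ
  set y : A → ∀ j, M j :=
    fun a j => transLE f (show j ≤ i + (j + 1) by omega) ((σ (j + 1)).1 a) with hy
  have hyc : ∀ a, y a ∈ invLimit f := by
    intro a
    show ∀ j, f j (y a (j + 1)) = y a j
    intro j
    have hfj : f j = transLE f (Nat.le_succ j) := by
      rw [transLE_succ f (le_refl j) (Nat.le_succ j), transLE_self, LinearMap.id_comp]
    have h2 : j ≤ i + (j + 2) := by omega
    have : f j (y a (j + 1)) = transLE f h2 ((σ (j + 2)).1 a) := by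
      rw [hy, hfj]
      rw [show transLE f (Nat.le_succ j)
            (transLE f (show j + 1 ≤ i + (j + 1 + 1) by omega) ((σ (j + 1 + 1)).1 a))
          = ((transLE f (Nat.le_succ j)) ∘ₗ
              (transLE f (show j + 1 ≤ i + (j + 2) by omega))) ((σ (j + 2)).1 a) from rfl]
      rw [← transLE_trans f (Nat.le_succ j) (show j + 1 ≤ i + (j + 2) by omega)]
    rw [this]
    exact seqAux_stab f m htor hsurj hker i x hx hxi s hs j a (j + 2) (by omega) h2
  have hsum : ∀ j, ∑ a ∈ s, a • y a j = x j := by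
    intro j
    have : ∑ a ∈ s, a • y a j
        = transLE f (show j ≤ i + (j + 1) by omega) (∑ a ∈ s, a • (σ (j + 1)).1 a) := by
      rw [map_sum]
      exact Finset.sum_congr rfl fun a _ => (map_smul _ _ _).symm
    rw [this, (σ (j + 1)).2, transLE_compat f hx]
  have hxeq : x = ∑ a ∈ s, a • y a := by
    funext j
    rw [Finset.sum_apply]
    simp only [Pi.smul_apply]
    exact (hsum j).symm
  rw [← hs, hxeq]
  exact Submodule.sum_mem _ fun a ha =>
    Submodule.smul_mem_smul (Submodule.subset_span ha) (hyc a)
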